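/- Let n be a finite index type and let (A_k) be a sequence of positive semidefinite matrices in Matrix n n ℂ such that the sequence of squares (A_k * A_k) converges to some matrix B. Then there is a subsequence of (A_k) that converges to a positive semidefinite matrix C, and this limit satisfies C * C = B. -/

import Mathlib

open scoped ComplexOrder
open Matrix

private lemma entry_sq_le {n : Type*} [Fintype n] {A : Matrix n n ℂ}
    (hA : A.IsHermitian) (i j : n) : ‖A i j‖ ^ 2 ≤ ‖(A * A) i i‖ := by
  classical
  have key : ∀ l, A i l * A l i = ((‖A i l‖ ^ 2 : ℝ) : ℂ) := by
    intro l
    rw [← hA.apply l i, Complex.star_def, Complex.mul_conj, Complex.normSq_eq_norm_sq]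
  have h1 : (A * A) i i = ((∑ l, ‖A i l‖ ^ 2 : ℝ) : ℂ) := by
    rw [Matrix.mul_apply, Complex.ofReal_sum]
    exact Finset.sum_congr rfl fun l _ => key l
  have h2 : ‖(A * A) i i‖ = ∑ l, ‖A i l‖ ^ 2 := by
    rw [h1, Complex.norm_real]
    exact abs_of_nonneg (Finset.sum_nonneg fun l _ => sq_nonneg _)
  rw [h2]
  exact Finset.single_le_sum (f := fun l => ‖A i l‖ ^ 2)
    (fun l _ => sq_nonneg _) (Finset.mem_univ j)

/-- If `(A k)` is a sequence of positive semidefinite complex matrices whose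
squares converge to `B`, then some subsequence of `(A k)` converges to a
positive semidefinite matrix `C` with `C * C = B`. -/
theorem posSemidef_subseq_of_sq_tendsto
    {n : Type*} [Fintype n] (A : ℕ → Matrix n n ℂ) (B : Matrix n n ℂ)
    (hA : ∀ k, (A k).PosSemidef)
    (hconv : Filter.Tendsto (fun k => A k * A k) Filter.atTop (nhds B)) :
    ∃ (φ : ℕ → ℕ) (C : Matrix n n ℂ), StrictMono φ ∧ C.PosSemidef ∧
      Filter.Tendsto (fun k => A (φ k)) Filter.atTop (nhds C) ∧ C * C = B := by
  classical
  -- per-row bound on the diagonal entries of the squares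
  have hdiag : ∀ i : n, ∃ M : ℝ, ∀ k, ‖(A k * A k) i i‖ ≤ M := by
    intro i
    have ht : Filter.Tendsto (fun k => ‖(A k * A k) i i‖) Filter.atTop (nhds ‖B i i‖) :=
      ((((continuous_apply i).comp (continuous_apply i)).tendsto B).comp hconv).norm
    obtain ⟨M, hM⟩ := ht.bddAbove_range
    exact ⟨M, fun k => hM ⟨k, rfl⟩⟩
  choose M hM using hdiag
  -- entrywise bound on `A k`
  have hbound : ∀ k i j, ‖A k i j‖ ≤ Real.sqrt (M i) := by
    intro k i j
    have h1 : ‖A k i j‖ ^ 2 ≤ M i := le_trans (entry_sq_le (hA k).1 i j) (hM i k)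
    have := Real.sqrt_le_sqrt h1
    rwa [Real.sqrt_sq (norm_nonneg _)] at this
  -- compact set containing the sequence
  have hcomp : IsCompact (Set.univ.pi fun i : n =>
      Set.univ.pi fun _ : n => Metric.closedBall (0 : ℂ) (Real.sqrt (M i)) :
      Set ((_ : n) → n → ℂ)) :=
    isCompact_univ_pi fun i => isCompact_univ_pi fun _ => isCompact_closedBall 0 _
  have hmem : ∀ k, A k ∈ (Set.univ.pi fun i : n =>
      Set.univ.pi fun _ : n => Metric.closedBall (0 : ℂ) (Real.sqrt (M i)) :
      Set ((_ : n) → n → ℂ)) := by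
    intro k
    refine Set.mem_univ_pi.2 ?_
    intro i
    rw [Set.mem_univ_pi]
    intro j
    simpa [Metric.mem_closedBall, dist_zero_right] using hbound k i j
  obtain ⟨C0, -, φ, hφ, hC0⟩ := hcomp.tendsto_subseq hmem
  set C : Matrix n n ℂ := Matrix.of C0 with hCdef
  have hC : Filter.Tendsto (fun k => A (φ k)) Filter.atTop (nhds C) := hC0
  -- limit of squares
  have hCC : Filter.Tendsto (fun k => A (φ k) * A (φ k)) Filter.atTop (nhds (C * C)) :=
    ((continuous_id.matrix_mul continuous_id).tendsto C).comp hC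
  have hB : Filter.Tendsto (fun k => A (φ k) * A (φ k)) Filter.atTop (nhds B) :=
    hconv.comp hφ.tendsto_atTop
  have hCCB : C * C = B := tendsto_nhds_unique hCC hB
  -- C is Hermitian
  have hherm : C.IsHermitian := by
    have h1 : Filter.Tendsto (fun k => (A (φ k))ᴴ) Filter.atTop (nhds Cᴴ) :=
      ((continuous_id.matrix_conjTranspose).tendsto C).comp hC
    have h2 : (fun k => (A (φ k))ᴴ) = fun k => A (φ k) := by
      funext k; exact (hA (φ k)).1
    rw [h2] at h1
    exact tendsto_nhds_unique h1 hC
  -- C is positive semidefinite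
  refine ⟨φ, C, hφ, (Matrix.PosSemidef.of_dotProduct_mulVec_nonneg hherm fun x => ?_), hC, hCCB⟩
  have h1 : Filter.Tendsto (fun k => dotProduct (star x) (Matrix.mulVec (A (φ k)) x))
      Filter.atTop (nhds (dotProduct (star x) (Matrix.mulVec C x))) := by
    have hcont : Continuous fun Z : Matrix n n ℂ => dotProduct (star x) (Matrix.mulVec Z x) := by
      refine continuous_finset_sum _ fun i _ => Continuous.mul continuous_const ?_
      exact continuous_finset_sum _ fun j _ =>
        Continuous.mul ((continuous_apply j).comp (continuous_apply i)) continuous_const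
    exact (hcont.tendsto C).comp hC
  exact ge_of_tendsto' h1 fun k => (hA (φ k)).dotProduct_mulVec_nonneg x
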